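/- For every configuration c of a sandpile there exists a unique stable configuration σ(c) such that c ⊢ σ(c); moreover σ(c) is independent of the toppling sequence chosen, i.e., every toppling sequence from c that terminates in a stable configuration terminates in this same configuration σ(c), and some toppling sequence from c does terminate in a stable configuration. -/

import Mathlib

/-- A sandpile: a finite connected multigraph with a distinguished sink vertex. -/
structure Sandpile where
  /-- vertex set -/
  V : Type
  [fintypeV : Fintype V]
  [decEqV : DecidableEq V]
  /-- symmetric edge-multiplicity function -/
  w : V → V → ℕ
  w_symm : ∀ u v, w u v = w v u
  w_loopless : ∀ v, w v v = 0
  /-- the sink -/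
  sink : V
  connected : (SimpleGraph.fromRel fun u v : V => 0 < w u v).Connected

attribute [instance] Sandpile.fintypeV Sandpile.decEqV

namespace Sandpile

variable (S : Sandpile)

/-- Ordinary (non-sink) vertices. -/
abbrev Ord := {v : S.V // v ≠ S.sink}

/-- Degree of a vertex: total multiplicity of incident edges. -/
def deg (v : S.V) : ℕ := ∑ u, S.w v u

/-- A configuration assigns a number of particles to each ordinary vertex. -/
abbrev Config := S.Ord → ℕ

/-- An ordinary vertex is unstable when it holds at least `deg` particles. -/
def Unstable (c : S.Config) (v : S.Ord) : Prop := S.deg v.1 ≤ c v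

/-- Toppling an (unstable) ordinary vertex. -/
def topple (c : S.Config) (v : S.Ord) : S.Config :=
  fun u => if u = v then c u - S.deg v.1 else c u + S.w v.1 u.1

/-- One toppling step. -/
def Step (c c' : S.Config) : Prop := ∃ v, S.Unstable c v ∧ c' = S.topple c v

/-- A configuration is stable when no ordinary vertex is unstable. -/
def Stable (c : S.Config) : Prop := ∀ v, ¬ S.Unstable c v

/-- Applying a list of topplings in order. -/
def applySeq (c : S.Config) : List S.Ord → S.Config
  | [] => c
  | v :: L => applySeq (S.topple c v) L

/-- The list of topplings is a valid toppling sequence from `c`: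
each vertex toppled is unstable at the moment it is toppled. -/
def ValidSeq (c : S.Config) : List S.Ord → Prop
  | [] => True
  | v :: L => S.Unstable c v ∧ ValidSeq (S.topple c v) L

end Sandpile


namespace Sandpile
variable {S : Sandpile}

lemma unstable_topple_of_ne {c : S.Config} {u v : S.Ord} (h : u ≠ v)
    (hu : S.Unstable c u) : S.Unstable (S.topple c v) u := by
  unfold Unstable at *
  simp only [topple, if_neg h]
  omega

lemma topple_comm {c : S.Config} {u v : S.Ord} (hu : S.Unstable c u)
    (hv : S.Unstable c v) (huv : u ≠ v) :
    S.topple (S.topple c u) v = S.topple (S.topple c v) u := by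
  unfold Unstable at hu hv
  funext x
  by_cases hxu : x = u <;> by_cases hxv : x = v
  · exact absurd (hxu ▸ hxv) huv
  · subst hxu
    simp [topple, huv, Ne.symm huv, S.w_loopless]
    omega
  · subst hxv
    simp [topple, huv, Ne.symm huv, S.w_loopless]
    omega
  · simp [topple, hxu, hxv]
    omega

lemma mem_of_unstable (L : List S.Ord) : ∀ (c : S.Config) {v : S.Ord},
    S.Unstable c v → S.ValidSeq c L → S.Stable (S.applySeq c L) → v ∈ L := by
  induction L with
  | nil => intro c v hv _ hs; exact absurd hv (hs v)
  | cons u L ih =>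
    intro c v hv hval hs
    by_cases h : v = u
    · simp [h]
    · exact List.mem_cons_of_mem _ (ih (S.topple c u) (unstable_topple_of_ne h hv) hval.2 hs)

lemma erase_front (L : List S.Ord) : ∀ (c : S.Config) {v : S.Ord},
    S.Unstable c v → S.ValidSeq c L → v ∈ L →
    S.ValidSeq (S.topple c v) (L.erase v) ∧
      S.applySeq c L = S.applySeq (S.topple c v) (L.erase v) := by
  induction L with
  | nil => intro c v _ _ h; simp at h
  | cons u L ih =>
    intro c v hv hval hmem
    by_cases h : u = v
    · subst h
      rw [List.erase_cons_head]
      exact ⟨hval.2, rfl⟩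
    · have hvmem : v ∈ L := by
        rcases List.mem_cons.mp hmem with h' | h'
        · exact absurd h'.symm h
        · exact h'
      have hv' : S.Unstable (S.topple c u) v := unstable_topple_of_ne (Ne.symm h) hv
      obtain ⟨h1, h2⟩ := ih (S.topple c u) hv' hval.2 hvmem
      have hcomm : S.topple (S.topple c u) v = S.topple (S.topple c v) u :=
        topple_comm hval.1 hv h
      rw [List.erase_cons_tail (by simp [h]; exact fun e => h (Subtype.ext e))]
      refine ⟨⟨unstable_topple_of_ne h hval.1, ?_⟩, ?_⟩
      · show S.ValidSeq (S.topple (S.topple c v) u) (L.erase v)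
        rw [← hcomm]; exact h1
      · show S.applySeq (S.topple c u) L = S.applySeq (S.topple (S.topple c v) u) (L.erase v)
        rw [← hcomm]; exact h2

lemma unique_aux (L : List S.Ord) : ∀ (c : S.Config) (M : List S.Ord),
    S.ValidSeq c L → S.Stable (S.applySeq c L) → S.ValidSeq c M →
    S.Stable (S.applySeq c M) → S.applySeq c M = S.applySeq c L := by
  induction L with
  | nil =>
    intro c M _ hsL hM _
    cases M with
    | nil => rfl
    | cons u M => exact absurd hM.1 (hsL u)
  | cons v L ih =>
    intro c M hL hsL hM hsM
    have hv : S.Unstable c v := hL.1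
    have hmem : v ∈ M := mem_of_unstable M c hv hM hsM
    obtain ⟨h1, h2⟩ := erase_front M c hv hM hmem
    rw [h2]
    exact ih (S.topple c v) (M.erase v) hL.2 hsL h1 (h2 ▸ hsM)

end Sandpile

namespace Sandpile
variable {S : Sandpile}

lemma deg_eq (v : S.V) : S.deg v = S.w v S.sink + ∑ u : S.Ord, S.w v u.1 := by
  rw [deg, ← Finset.add_sum_erase _ _ (Finset.mem_univ S.sink)]
  congr 1
  exact Finset.sum_subtype _ (fun x => by simp) (fun u => S.w v u)

lemma sum_topple {c : S.Config} {v : S.Ord} (hv : S.Unstable c v) :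
    (∑ u, S.topple c v u) + S.w v.1 S.sink = ∑ u, c u := by
  have h1 : ∑ u, S.topple c v u
      = (c v - S.deg v.1) + ∑ u ∈ Finset.univ.erase v, (c u + S.w v.1 u.1) := by
    rw [← Finset.add_sum_erase _ (S.topple c v) (Finset.mem_univ v)]
    congr 1
    · simp [topple]
    · refine Finset.sum_congr rfl fun u hu => ?_
      have : u ≠ v := (Finset.mem_erase.mp hu).1
      simp [topple, this]
  have h2 : ∑ u, c u = c v + ∑ u ∈ Finset.univ.erase v, c u :=
    (Finset.add_sum_erase _ c (Finset.mem_univ v)).symm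
  have h3 : S.deg v.1 = S.w v.1 S.sink + ∑ u ∈ Finset.univ.erase v, S.w v.1 u.1 := by
    rw [deg_eq]
    congr 1
    rw [← Finset.add_sum_erase _ (fun u : S.Ord => S.w v.1 u.1) (Finset.mem_univ v)]
    simp [S.w_loopless]
  have hv' : S.deg v.1 ≤ c v := hv
  rw [h1, Finset.sum_add_distrib, h2]
  omega

lemma valid_total (L : List S.Ord) : ∀ c : S.Config, S.ValidSeq c L →
    (∑ u, S.applySeq c L u) + (L.map fun v => S.w v.1 S.sink).sum = ∑ u, c u := by
  induction L with
  | nil => intro c _; simp [applySeq]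
  | cons v L ih =>
    intro c hval
    have h1 := ih (S.topple c v) hval.2
    have h2 := sum_topple hval.1
    show (∑ u, S.applySeq (S.topple c v) L u) + _ = _
    simp only [List.map_cons, List.sum_cons]
    omega

lemma applySeq_count (L : List S.Ord) : ∀ (c : S.Config), S.ValidSeq c L → ∀ u : S.Ord,
    (S.applySeq c L u : ℤ) =
      c u + (∑ x : S.Ord, (L.count x : ℤ) * S.w x.1 u.1) - (L.count u : ℤ) * S.deg u.1 := by
  induction L with
  | nil => intro c _ u; simp [applySeq]
  | cons v L ih =>
    intro c hval u
    have hiv := ih (S.topple c v) hval.2 u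
    have hvle : S.deg v.1 ≤ c v := hval.1
    have hcnt : ∀ x : S.Ord, (((v :: L).count x : ℕ) : ℤ)
        = (L.count x : ℤ) + if x = v then 1 else 0 := by
      intro x
      rw [List.count_cons]
      by_cases h : x = v
      · simp [h]
      · simp [h, Ne.symm h]; exact fun e => h (Subtype.ext e).symm
    have hsum : (∑ x : S.Ord, ((v :: L).count x : ℤ) * S.w x.1 u.1)
        = (∑ x : S.Ord, (L.count x : ℤ) * S.w x.1 u.1) + S.w v.1 u.1 := by
      simp only [hcnt, add_mul, ite_mul, one_mul, zero_mul]
      rw [Finset.sum_add_distrib, Finset.sum_ite_eq' Finset.univ v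
        (fun x : S.Ord => (S.w x.1 u.1 : ℤ))]
      simp
    have htop : (S.topple c v u : ℤ) = c u + S.w v.1 u.1 - (if u = v then (S.deg u.1 : ℤ) else 0) := by
      by_cases h : u = v
      · subst h
        simp only [topple, if_pos rfl, S.w_loopless]
        push_cast [Nat.cast_sub hvle]
        ring
      · simp only [topple, if_neg h]
        push_cast
        simp [h]
    show (S.applySeq (S.topple c v) L u : ℤ) = _
    rw [hiv, htop, hsum, hcnt u]
    by_cases h : u = v <;> simp [h] <;> ring

lemma count_mul_le_map_sum (f : S.Ord → ℕ) (v : S.Ord) (L : List S.Ord) :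
    L.count v * f v ≤ (L.map f).sum := by
  induction L with
  | nil => simp
  | cons a L ih =>
    simp only [List.map_cons, List.sum_cons]
    by_cases h : v = a
    · subst h
      rw [List.count_cons_self]
      have : (L.count v + 1) * f v = L.count v * f v + f v := by ring
      omega
    · rw [List.count_cons_of_ne (Ne.symm h)]
      omega

lemma applySeq_le_total {c : S.Config} {L : List S.Ord} (h : S.ValidSeq c L) (u : S.Ord) :
    S.applySeq c L u ≤ ∑ x, c x := by
  have h1 := valid_total L c h
  have h2 : S.applySeq c L u ≤ ∑ x, S.applySeq c L x :=
    Finset.single_le_sum (fun x _ => Nat.zero_le _) (Finset.mem_univ u)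
  omega

lemma count_le_total_of_sink_adj {c : S.Config} {L : List S.Ord} (h : S.ValidSeq c L)
    {v : S.Ord} (hadj : 0 < S.w v.1 S.sink) : L.count v ≤ ∑ x, c x := by
  have h1 := valid_total L c h
  have h2 := count_mul_le_map_sum (fun x => S.w x.1 S.sink) v L
  have h3 : L.count v ≤ L.count v * S.w v.1 S.sink := Nat.le_mul_of_pos_right _ hadj
  omega

lemma count_mul_le_of_ord {c : S.Config} {L : List S.Ord} (h : S.ValidSeq c L)
    (v u : S.Ord) :
    L.count v * S.w v.1 u.1 ≤ (∑ x, c x) + L.count u * S.deg u.1 := by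
  have hid := applySeq_count L c h u
  have h1 : (L.count v : ℤ) * S.w v.1 u.1 ≤ ∑ x : S.Ord, (L.count x : ℤ) * S.w x.1 u.1 :=
    Finset.single_le_sum (f := fun x : S.Ord => (L.count x : ℤ) * S.w x.1 u.1)
      (fun x _ => by positivity) (Finset.mem_univ v)
  have h2 : S.applySeq c L u ≤ ∑ x, c x := applySeq_le_total h u
  have key : ((L.count v * S.w v.1 u.1 : ℕ) : ℤ)
      ≤ (((∑ x, c x) + L.count u * S.deg u.1 : ℕ) : ℤ) := by
    push_cast
    have h2' : (S.applySeq c L u : ℤ) ≤ ((∑ x, c x : ℕ) : ℤ) := by exact_mod_cast h2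
    push_cast at h2'
    have hc : (0 : ℤ) ≤ c u := by positivity
    linarith
  exact_mod_cast key

end Sandpile

namespace Sandpile
variable {S : Sandpile}

/-- The underlying simple graph. -/
abbrev G (S : Sandpile) : SimpleGraph S.V := SimpleGraph.fromRel fun u v : S.V => 0 < S.w u v

lemma exists_closer (v : S.Ord) :
    ∃ u : S.V, 0 < S.w v.1 u ∧ (G S).dist u S.sink + 1 ≤ (G S).dist v.1 S.sink := by
  have hreach : (G S).Reachable v.1 S.sink := S.connected v.1 S.sink
  obtain ⟨p, hp⟩ := hreach.exists_walk_length_eq_dist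
  obtain ⟨u, h, q, rfl⟩ := p.exists_eq_cons_of_ne v.2
  · refine ⟨u, ?_, ?_⟩
    · rw [SimpleGraph.fromRel_adj] at h
      rcases h.2 with h' | h'
      · exact h'
      · rw [S.w_symm]; exact h'
    · have h1 : (G S).dist u S.sink ≤ q.length := SimpleGraph.dist_le q
      rw [SimpleGraph.Walk.length_cons] at hp
      omega

lemma count_le_F (c : S.Config) (d : ℕ) : ∀ (v : S.Ord),
    (G S).dist v.1 S.sink ≤ d → ∀ L : List S.Ord, S.ValidSeq c L →
    L.count v ≤ ((∑ x, c x) + 1) * ((∑ x : S.V, S.deg x) + 1) ^ d := by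
  induction d with
  | zero =>
    intro v hd L _
    have hreach : (G S).Reachable v.1 S.sink := S.connected v.1 S.sink
    have := hreach.pos_dist_of_ne v.2
    omega
  | succ d ih =>
    intro v hd L hL
    set N := ∑ x, c x with hN
    set D := ∑ x : S.V, S.deg x with hD
    have hFmono : (N + 1) * (D + 1) ^ d * (D + 1) = (N + 1) * (D + 1) ^ (d + 1) := by ring
    have hFge : N + 1 ≤ (N + 1) * (D + 1) ^ d :=
      Nat.le_mul_of_pos_right _ (Nat.pow_pos (Nat.succ_pos D))
    obtain ⟨u, hwu, hdu⟩ := exists_closer v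
    by_cases hus : u = S.sink
    · subst hus
      have := count_le_total_of_sink_adj hL hwu
      have : L.count v ≤ N := this
      calc L.count v ≤ N + 1 := by omega
        _ ≤ (N + 1) * (D + 1) ^ (d + 1) :=
          Nat.le_mul_of_pos_right _ (Nat.pow_pos (Nat.succ_pos D))
    · set u' : S.Ord := ⟨u, hus⟩ with hu'
      have hdist : (G S).dist u'.1 S.sink ≤ d := by
        simp only [hu']
        omega
      have hcu := ih u' hdist L hL
      have hkey := count_mul_le_of_ord hL v u'
      have hwv : 0 < S.w v.1 u'.1 := hwu
      have hdegle : S.deg u'.1 ≤ D :=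
        Finset.single_le_sum (f := S.deg) (fun x _ => Nat.zero_le _) (Finset.mem_univ u'.1)
      have h1 : L.count v ≤ L.count v * S.w v.1 u'.1 := Nat.le_mul_of_pos_right _ hwv
      have h2 : L.count u' * S.deg u'.1 ≤ ((N + 1) * (D + 1) ^ d) * D :=
        Nat.mul_le_mul hcu hdegle
      calc L.count v ≤ N + L.count u' * S.deg u'.1 := by omega
        _ ≤ N + ((N + 1) * (D + 1) ^ d) * D := by omega
        _ ≤ (N + 1) * (D + 1) ^ d + ((N + 1) * (D + 1) ^ d) * D := by omega
        _ = (N + 1) * (D + 1) ^ (d + 1) := by ring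

lemma length_eq_sum_count (L : List S.Ord) : L.length = ∑ v : S.Ord, L.count v := by
  induction L with
  | nil => simp
  | cons a L ih =>
    have : ∀ v : S.Ord, (a :: L).count v = L.count v + if v = a then 1 else 0 := by
      intro v
      rw [List.count_cons]
      by_cases h : v = a
      · simp [h]
      · simp [h, Ne.symm h]; exact fun e => h (Subtype.ext e).symm
    simp only [List.length_cons, this, Finset.sum_add_distrib, ih,
      Finset.sum_ite_eq' Finset.univ a (fun _ : S.Ord => 1)]
    simp

lemma length_le_bound (c : S.Config) (L : List S.Ord) (hL : S.ValidSeq c L) :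
    L.length ≤ ∑ v : S.Ord,
      ((∑ x, c x) + 1) * ((∑ x : S.V, S.deg x) + 1) ^ ((G S).dist v.1 S.sink) := by
  rw [length_eq_sum_count]
  exact Finset.sum_le_sum fun v _ => count_le_F c _ v le_rfl L hL

lemma exists_stable (k : ℕ) : ∀ c : S.Config,
    (∀ L : List S.Ord, S.ValidSeq c L → L.length ≤ k) →
    ∃ L : List S.Ord, S.ValidSeq c L ∧ S.Stable (S.applySeq c L) := by
  induction k with
  | zero =>
    intro c hb
    refine ⟨[], trivial, fun v hv => ?_⟩
    have := hb [v] ⟨hv, trivial⟩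
    simp at this
  | succ k ih =>
    intro c hb
    by_cases hs : S.Stable c
    · exact ⟨[], trivial, hs⟩
    · simp only [Stable, not_forall, not_not] at hs
      obtain ⟨v, hv⟩ := hs
      obtain ⟨L, hL, hsL⟩ := ih (S.topple c v)
        (fun L hL => by have := hb (v :: L) ⟨hv, hL⟩; simpa using this)
      exact ⟨v :: L, ⟨hv, hL⟩, hsL⟩

end Sandpile


/-- Every configuration `c` of a sandpile has a unique stable
configuration `σ(c)` with `c ⊢ σ(c)`: some toppling sequence from `c` terminates
in a stable configuration, and every toppling sequence from `c` terminating in a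
stable configuration terminates in this same configuration. -/
theorem sandpile_unique_stabilization (S : Sandpile) (c : S.Config) :
    ∃ σc : S.Config,
      (∃ L : List S.Ord, S.ValidSeq c L ∧ S.applySeq c L = σc ∧ S.Stable σc) ∧
      (∀ L : List S.Ord, S.ValidSeq c L → S.Stable (S.applySeq c L) →
        S.applySeq c L = σc) := by
  classical
  obtain ⟨L₀, hL₀, hs₀⟩ := Sandpile.exists_stable _ c (Sandpile.length_le_bound c)
  exact ⟨S.applySeq c L₀, ⟨L₀, hL₀, rfl, hs₀⟩,
    fun L hL hsL => Sandpile.unique_aux L₀ c L hL₀ hs₀ hL hsL⟩
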